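/- Let X have probability density p_T(t) on [0,T] (conditional detection time of a double-exponential photon (a,b)) and let Y be uniform on [0,T] (a dark count), independent of X. Then P(|X - Y| ≤ τ) · p_det(T)/η = (a/(2b(a-2b)T))[1 + 2bτ - e^{-2bτ} + e^{-2bT}(1 - 2bτ - e^{2bτ})] - (2b/(a(a-2b)T))[1 + aτ - e^{-aτ} + e^{-aT}(1 - aτ - e^{aτ})]. -/

import Mathlib

open MeasureTheory

noncomputable section

/-- Unconditional detection-time density of a double-exponential photon `(a,b)`. -/
def pdens (a b η t : ℝ) : ℝ :=
  2 * a * b * η / (a - 2 * b) * (Real.exp (-(2 * b * t)) - Real.exp (-(a * t)))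

/-- Detection probability within the window `[0,T]`. -/
def pdet (a b η T : ℝ) : ℝ :=
  η * (1 - a / (a - 2 * b) * Real.exp (-(2 * b * T)) +
    2 * b / (a - 2 * b) * Real.exp (-(a * T)))

lemma Lexp (l c d : ℝ) (hl : l ≠ 0) :
    ∫ x in c..d, Real.exp (-(l*x)) = (Real.exp (-(l*c)) - Real.exp (-(l*d)))/l := by
  have h : ∀ x ∈ Set.uIcc c d, HasDerivAt (fun x => -Real.exp (-(l*x))/l) (Real.exp (-(l*x))) x := by
    intro x _
    have h1 : HasDerivAt (fun x : ℝ => -(l*x)) (-l) x := by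
      simpa using ((hasDerivAt_id x).const_mul l).fun_neg
    have h3 : HasDerivAt (fun x => -(Real.exp (-(l*x))/l)) (-(Real.exp (-(l * x)) * -l / l)) x :=
      (h1.exp.div_const l).neg
    have he : Real.exp (-(l*x)) = -(Real.exp (-(l * x)) * -l / l) := by
      field_simp
    rw [he]
    convert h3 using 2
    ring
  rw [intervalIntegral.integral_eq_sub_of_hasDerivAt h
    (Continuous.intervalIntegrable (by continuity) c d)]
  ring

lemma Lxexp (l c d : ℝ) (hl : l ≠ 0) :
    ∫ x in c..d, x * Real.exp (-(l*x)) =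
      ((l*c+1)*Real.exp (-(l*c)) - (l*d+1)*Real.exp (-(l*d)))/l^2 := by
  have h : ∀ x ∈ Set.uIcc c d, HasDerivAt (fun x => -((l*x+1)/l^2) * Real.exp (-(l*x)))
      (x * Real.exp (-(l*x))) x := by
    intro x _
    have h1 : HasDerivAt (fun x : ℝ => -(l*x)) (-l) x := by
      simpa using ((hasDerivAt_id x).const_mul l).fun_neg
    have h3 : HasDerivAt (fun x : ℝ => -((l*x+1)/l^2)) (-(l/l^2)) x := by
      simpa using ((((hasDerivAt_id x).const_mul l).add_const 1).div_const (l^2)).fun_neg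
    have h4 : HasDerivAt (fun x => -((l*x+1)/l^2) * Real.exp (-(l*x)))
        (-(l/l^2) * Real.exp (-(l*x)) + -((l*x+1)/l^2) * (Real.exp (-(l*x)) * -l)) x :=
      h3.mul h1.exp
    convert h4 using 1
    field_simp
    ring
  rw [intervalIntegral.integral_eq_sub_of_hasDerivAt h
    (Continuous.intervalIntegrable (by continuity) c d)]
  field_simp
  ring

lemma Lqs (l c d q s : ℝ) (hl : l ≠ 0) :
    ∫ x in c..d, (q + s*x) * Real.exp (-(l*x)) =
      q * ((Real.exp (-(l*c)) - Real.exp (-(l*d)))/l)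
      + s * (((l*c+1)*Real.exp (-(l*c)) - (l*d+1)*Real.exp (-(l*d)))/l^2) := by
  have h : ∀ x:ℝ, (q + s*x) * Real.exp (-(l*x))
      = q * Real.exp (-(l*x)) + s * (x * Real.exp (-(l*x))) := fun x => by ring
  simp only [h]
  rw [intervalIntegral.integral_add
      ((Continuous.intervalIntegrable (by continuity) c d))
      ((Continuous.intervalIntegrable (by continuity) c d)),
    intervalIntegral.integral_const_mul, intervalIntegral.integral_const_mul,
    Lexp _ _ _ hl, Lxexp _ _ _ hl]

lemma Lpdens (a b η q s c d : ℝ) (ha : a ≠ 0) (hb : (2:ℝ)*b ≠ 0) :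
    ∫ x in c..d, pdens a b η x * (q + s*x) =
      2*a*b*η/(a-2*b) * (
        (q * ((Real.exp (-(2*b*c)) - Real.exp (-(2*b*d)))/(2*b))
          + s * (((2*b*c+1)*Real.exp (-(2*b*c)) - (2*b*d+1)*Real.exp (-(2*b*d)))/(2*b)^2))
        - (q * ((Real.exp (-(a*c)) - Real.exp (-(a*d)))/a)
          + s * (((a*c+1)*Real.exp (-(a*c)) - (a*d+1)*Real.exp (-(a*d)))/a^2)) ) := by
  have h : ∀ x:ℝ, pdens a b η x * (q + s*x)
      = 2*a*b*η/(a-2*b) *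
        ((q + s*x)*Real.exp (-(2*b*x)) - (q + s*x)*Real.exp (-(a*x))) := fun x => by
    unfold pdens; ring
  simp only [h]
  rw [intervalIntegral.integral_const_mul,
    intervalIntegral.integral_sub
      ((Continuous.intervalIntegrable (by continuity) c d))
      ((Continuous.intervalIntegrable (by continuity) c d)),
    Lqs _ _ _ _ _ hb, Lqs _ _ _ _ _ ha]

lemma inner_int (T τ x : ℝ) (hτ : 0 ≤ τ) (hx0 : 0 ≤ x) (hxT : x ≤ T) :
    ∫ y in (0:ℝ)..T, (if |x - y| ≤ τ then (1:ℝ) else 0)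
      = min (x+τ) T - max (x-τ) 0 := by
  set f : ℝ → ℝ := fun y => if |x - y| ≤ τ then (1:ℝ) else 0 with hfdef
  set u := max (x-τ) 0 with hu
  set v := min (x+τ) T with hv
  have hux : u ≤ x := max_le (by linarith) hx0
  have hxv : x ≤ v := le_min (by linarith) hxT
  have huv : u ≤ v := hux.trans hxv
  have hvT : v ≤ T := min_le_right _ _
  have hu0 : 0 ≤ u := le_max_right _ _
  have hfind : f = Set.indicator (Set.Icc (x-τ) (x+τ)) (fun _ => (1:ℝ)) := by
    funext y
    simp only [hfdef, Set.indicator, Set.mem_Icc]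
    congr 1
    rw [abs_le, eq_iff_iff]
    constructor
    · rintro ⟨h1, h2⟩; constructor <;> linarith
    · rintro ⟨h1, h2⟩; constructor <;> linarith
  have hint : ∀ c d : ℝ, IntervalIntegrable f volume c d := by
    intro c d
    rw [hfind]
    refine Integrable.intervalIntegrable ?_
    rw [integrable_indicator_iff measurableSet_Icc]
    exact integrableOn_const measure_Icc_lt_top.ne
  have s1 : ∫ y in (0:ℝ)..u, f y = 0 := by
    rw [intervalIntegral.integral_congr_ae (g := fun _ => (0:ℝ)) ?_,
      intervalIntegral.integral_zero]
    have hae : ∀ᵐ y : ℝ, y ∉ ({x - τ} : Set ℝ) := by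
      rw [← MeasureTheory.measure_eq_zero_iff_ae_notMem]
      exact Real.volume_singleton
    filter_upwards [hae] with y hy hymem
    simp only [Set.mem_singleton_iff] at hy
    rw [Set.uIoc_of_le hu0] at hymem
    obtain ⟨hy1, hy2⟩ := hymem
    rcases le_or_gt (x - τ) 0 with h | h
    · exfalso
      have : u = 0 := max_eq_right h
      linarith [this ▸ hy2]
    · have huxτ : u = x - τ := max_eq_left h.le
      have : y < x - τ := lt_of_le_of_ne (huxτ ▸ hy2) hy
      have : τ < |x - y| := lt_of_lt_of_le (by linarith) (le_abs_self _)
      simp only [hfdef, if_neg (not_le.2 this)]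
  have s2 : ∫ y in u..v, f y = v - u := by
    rw [intervalIntegral.integral_congr (g := fun _ => (1:ℝ)) ?_]
    · simp
    · intro y hy
      rw [Set.uIcc_of_le huv] at hy
      obtain ⟨hy1, hy2⟩ := hy
      have h1 : x - τ ≤ y := le_trans (le_max_left _ _) hy1
      have h2 : y ≤ x + τ := le_trans hy2 (min_le_left _ _)
      have : |x - y| ≤ τ := abs_le.2 ⟨by linarith, by linarith⟩
      simp only [hfdef, if_pos this]
  have s3 : ∫ y in v..T, f y = 0 := by
    rw [intervalIntegral.integral_congr_ae (g := fun _ => (0:ℝ)) ?_,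
      intervalIntegral.integral_zero]
    refine Filter.Eventually.of_forall fun y hymem => ?_
    rw [Set.uIoc_of_le hvT] at hymem
    obtain ⟨hy1, hy2⟩ := hymem
    rcases le_or_gt (x + τ) T with h | h
    · have hvxτ : v = x + τ := min_eq_left h
      have hyx : τ < y - x := by rw [hvxτ] at hy1; linarith
      have : τ < |x - y| := by
        calc τ < y - x := hyx
        _ ≤ |x - y| := by rw [abs_sub_comm]; exact le_abs_self _
      simp only [hfdef, if_neg (not_le.2 this)]
    · exfalso
      have : v = T := min_eq_right h.le
      linarith [this ▸ hy1]
  have comb1 := intervalIntegral.integral_add_adjacent_intervals (hint 0 u) (hint u v)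
  have comb2 := intervalIntegral.integral_add_adjacent_intervals (hint 0 v) (hint v T)
  rw [← comb2, ← comb1, s1, s2, s3]
  ring

set_option maxHeartbeats 2000000 in
/-- photon–dark-count coincidence probability. `X` has the conditional
density `p_T(t) = p(t)/p_det(T)` on `[0,T]` and `Y` (a dark count) is uniform on
`[0,T]`, independent of `X`; then `P(|X-Y| ≤ τ) · p_det(T)/η` equals the stated
closed-form expression. -/
theorem photon_dark_count_coincidence_probability
    (a b η T τ : ℝ) (ha : 0 < a) (hb : 0 < b) (hη : 0 < η)
    (hab : a ≠ 2 * b) (hT : 0 < T) (hτ0 : 0 ≤ τ) (hτT : τ ≤ T) :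
    (pdet a b η T / η) *
      (∫ x in (0 : ℝ)..T, ∫ y in (0 : ℝ)..T,
        (pdens a b η x / pdet a b η T) * (1 / T) *
          (if |x - y| ≤ τ then (1 : ℝ) else 0)) =
      a / (2 * b * (a - 2 * b) * T) *
          (1 + 2 * b * τ - Real.exp (-(2 * b * τ)) +
            Real.exp (-(2 * b * T)) * (1 - 2 * b * τ - Real.exp (2 * b * τ))) -
        2 * b / (a * (a - 2 * b) * T) *
          (1 + a * τ - Real.exp (-(a * τ)) +
            Real.exp (-(a * T)) * (1 - a * τ - Real.exp (a * τ))) := by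
  have haz : a ≠ 0 := ne_of_gt ha
  have hb2 : (2:ℝ)*b ≠ 0 := by positivity
  have hab' : a - 2*b ≠ 0 := sub_ne_zero.2 hab
  have contp : Continuous (fun x => pdens a b η x) := by unfold pdens; continuity
  -- total integral of the density equals pdet
  have hPint : ∫ x in (0:ℝ)..T, pdens a b η x = pdet a b η T := by
    have h0 : ∫ x in (0:ℝ)..T, pdens a b η x
        = ∫ x in (0:ℝ)..T, pdens a b η x * (1 + 0*x) :=
      intervalIntegral.integral_congr fun x _ => by ring
    rw [h0, Lpdens a b η 1 0 0 T haz hb2]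
    simp only [mul_zero, neg_zero, Real.exp_zero]
    unfold pdet
    field_simp
    ring
  -- pdet is positive
  have hpos : 0 < pdet a b η T := by
    rw [← hPint]
    refine intervalIntegral.intervalIntegral_pos_of_pos_on (contp.intervalIntegrable 0 T) ?_ hT
    intro x hx
    unfold pdens
    rcases lt_or_gt_of_ne hab with h | h
    · apply mul_pos_of_neg_of_neg
      · apply div_neg_of_pos_of_neg
        · positivity
        · linarith
      · rw [sub_neg]
        exact Real.exp_lt_exp.2 (by nlinarith [hx.1])
    · apply mul_pos
      · apply div_pos
        · positivity
        · linarith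
      · rw [sub_pos]
        exact Real.exp_lt_exp.2 (by nlinarith [hx.1])
  have hpd : pdet a b η T ≠ 0 := ne_of_gt hpos
  -- split the "max" integrals
  have contA : Continuous (fun x => pdens a b η x * max (τ - x) 0) :=
    contp.mul ((continuous_const.sub continuous_id).max continuous_const)
  have contB : Continuous (fun x => pdens a b η x * max (x - (T-τ)) 0) :=
    contp.mul ((continuous_id.sub continuous_const).max continuous_const)
  have hA : ∫ x in (0:ℝ)..T, pdens a b η x * max (τ - x) 0
      = ∫ x in (0:ℝ)..τ, pdens a b η x * (τ + (-1)*x) := by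
    rw [← intervalIntegral.integral_add_adjacent_intervals
      (contA.intervalIntegrable 0 τ) (contA.intervalIntegrable τ T)]
    have h1 : ∫ x in (0:ℝ)..τ, pdens a b η x * max (τ - x) 0
        = ∫ x in (0:ℝ)..τ, pdens a b η x * (τ + (-1)*x) :=
      intervalIntegral.integral_congr fun x hx => by
        rw [Set.uIcc_of_le hτ0] at hx
        rw [max_eq_left (by linarith [hx.2])]; ring
    have h2 : ∫ x in τ..T, pdens a b η x * max (τ - x) 0 = 0 := by
      rw [intervalIntegral.integral_congr (g := fun _ => (0:ℝ)) fun x hx => ?_,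
        intervalIntegral.integral_zero]
      rw [Set.uIcc_of_le hτT] at hx
      rw [max_eq_right (by linarith [hx.1]), mul_zero]
    rw [h1, h2, add_zero]
  have hTτ0 : (0:ℝ) ≤ T - τ := by linarith
  have hTτT : T - τ ≤ T := by linarith
  have hB : ∫ x in (0:ℝ)..T, pdens a b η x * max (x - (T-τ)) 0
      = ∫ x in (T-τ)..T, pdens a b η x * (-(T-τ) + 1*x) := by
    rw [← intervalIntegral.integral_add_adjacent_intervals
      (contB.intervalIntegrable 0 (T-τ)) (contB.intervalIntegrable (T-τ) T)]
    have h1 : ∫ x in (0:ℝ)..(T-τ), pdens a b η x * max (x - (T-τ)) 0 = 0 := by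
      rw [intervalIntegral.integral_congr (g := fun _ => (0:ℝ)) fun x hx => ?_,
        intervalIntegral.integral_zero]
      rw [Set.uIcc_of_le hTτ0] at hx
      rw [max_eq_right (by linarith [hx.2]), mul_zero]
    have h2 : ∫ x in (T-τ)..T, pdens a b η x * max (x - (T-τ)) 0
        = ∫ x in (T-τ)..T, pdens a b η x * (-(T-τ) + 1*x) :=
      intervalIntegral.integral_congr fun x hx => by
        rw [Set.uIcc_of_le hTτT] at hx
        rw [max_eq_left (by linarith [hx.1])]; ring
    rw [h1, h2, zero_add]
  -- pointwise identity for the window length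
  have hm : ∀ x : ℝ, min (x+τ) T - max (x-τ) 0
      = 2*τ - max (x - (T-τ)) 0 - max (τ - x) 0 := by
    intro x
    simp only [min_def, max_def]
    split_ifs <;> linarith
  -- main integral decomposition
  have hmain : ∫ x in (0:ℝ)..T, pdens a b η x * (min (x+τ) T - max (x-τ) 0)
      = 2*τ * pdet a b η T
        - (∫ x in (T-τ)..T, pdens a b η x * (-(T-τ) + 1*x))
        - (∫ x in (0:ℝ)..τ, pdens a b η x * (τ + (-1)*x)) := by
    have h : ∀ x : ℝ, pdens a b η x * (min (x+τ) T - max (x-τ) 0)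
        = 2*τ * pdens a b η x - pdens a b η x * max (x - (T-τ)) 0
          - pdens a b η x * max (τ - x) 0 := fun x => by rw [hm x]; ring
    simp only [h]
    rw [intervalIntegral.integral_sub
        (f := fun x => 2*τ * pdens a b η x - pdens a b η x * max (x - (T-τ)) 0)
        ((((continuous_const.mul contp : Continuous fun x => 2*τ * pdens a b η x)).sub contB).intervalIntegrable 0 T)
        (contA.intervalIntegrable 0 T),
      intervalIntegral.integral_sub
        (f := fun x => 2*τ * pdens a b η x)
        (((continuous_const.mul contp : Continuous fun x => 2*τ * pdens a b η x)).intervalIntegrable 0 T)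
        (contB.intervalIntegrable 0 T),
      intervalIntegral.integral_const_mul, hPint, hA, hB]
  -- rewrite the double integral
  have hdouble : (∫ x in (0 : ℝ)..T, ∫ y in (0 : ℝ)..T,
        (pdens a b η x / pdet a b η T) * (1 / T) *
          (if |x - y| ≤ τ then (1 : ℝ) else 0))
      = 1/(pdet a b η T * T) *
        ∫ x in (0:ℝ)..T, pdens a b η x * (min (x+τ) T - max (x-τ) 0) := by
    rw [← intervalIntegral.integral_const_mul]
    refine intervalIntegral.integral_congr fun x hx => ?_
    rw [Set.uIcc_of_le hT.le] at hx
    rw [intervalIntegral.integral_const_mul, inner_int T τ x hτ0 hx.1 hx.2]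
    rw [div_eq_mul_inv, one_div, one_div, mul_inv]
    ring
  have hη' : η ≠ 0 := ne_of_gt hη
  have hT' : T ≠ 0 := ne_of_gt hT
  have hbz : b ≠ 0 := ne_of_gt hb
  have hfact : ∀ M : ℝ, pdet a b η T / η * (1/(pdet a b η T * T) * M) = M/(η*T) := by
    intro M
    field_simp
  rw [hdouble, hfact, hmain,
    Lpdens a b η (-(T-τ)) 1 (T-τ) T haz hb2,
    Lpdens a b η τ (-1) 0 τ haz hb2]
  simp only [mul_zero, neg_zero, Real.exp_zero]
  have e1 : Real.exp (-(2*b*(T-τ))) = Real.exp (-(2*b*T)) * Real.exp (2*b*τ) := by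
    rw [← Real.exp_add]; ring_nf
  have e2 : Real.exp (-(a*(T-τ))) = Real.exp (-(a*T)) * Real.exp (a*τ) := by
    rw [← Real.exp_add]; ring_nf
  rw [e1, e2, Real.exp_neg (2*b*τ), Real.exp_neg (a*τ)]
  unfold pdet
  rw [div_eq_iff (by positivity : η*T ≠ 0)]
  field_simp [Real.exp_ne_zero]
  ring
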